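/- Assume all relations are ≤, that the aggregated sparsity pattern graph G of B_0,...,B_m is a forest (contains no cycles), and that every edge of G is sign-definite, i.e., for every edge {i,j} of G either [B_k]_{ij} ≥ 0 for all k ∈ {0,...,m} or [B_k]_{ij} ≤ 0 for all k ∈ {0,...,m}. Then η(δ) = ζ(δ) for every δ ∈ ℝ^m. -/

import Mathlib

open Matrix BigOperators

noncomputable section

/-- Trace inner product `⟨A,X⟩ = Σᵢⱼ Aᵢⱼ Xᵢⱼ`. -/
def mInner {N : ℕ} (A X : Matrix (Fin N) (Fin N) ℝ) : ℝ :=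
  ∑ i, ∑ j, A i j * X i j

/-- The quadratic function `u ↦ (u,1)ᵀ B (u,1)` on `ℝⁿ`. -/
def quadF {n : ℕ} (B : Matrix (Fin (n + 1)) (Fin (n + 1)) ℝ) (u : Fin n → ℝ) : ℝ :=
  Fin.snoc u 1 ⬝ᵥ (B *ᵥ Fin.snoc u 1)

/-- A relation on `ℝ` is standard if it is `≤`, `=`, or `≥`. -/
def IsStdRel (r : ℝ → ℝ → Prop) : Prop :=
  r = (· ≤ ·) ∨ r = (· = ·) ∨ r = (· ≥ ·)

section Single

variable (nn m : ℕ) (B : Fin (m + 1) → Matrix (Fin (nn + 1)) (Fin (nn + 1)) ℝ)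

/-- Feasibility of `u` for QCQP(δ) (all relations `≤`). -/
def qcqpFeas (δ : Fin m → ℝ) (u : Fin nn → ℝ) : Prop :=
  ∀ k : Fin m, quadF (B k.succ) u ≤ δ k

/-- The optimal value `ζ(δ)` of QCQP(δ). -/
def qcqpVal (δ : Fin m → ℝ) : EReal :=
  sInf {y : EReal | ∃ u : Fin nn → ℝ,
    qcqpFeas nn m B δ u ∧ y = ((quadF (B 0) u : ℝ) : EReal)}

/-- Feasibility of `X` for the Shor relaxation SDPR(δ). -/
def sdprFeas (δ : Fin m → ℝ) (X : Matrix (Fin (nn + 1)) (Fin (nn + 1)) ℝ) : Prop :=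
  X.PosSemidef ∧ X (Fin.last nn) (Fin.last nn) = 1 ∧
    ∀ k : Fin m, mInner (B k.succ) X ≤ δ k

/-- The optimal value `η(δ)` of SDPR(δ). -/
def sdprVal (δ : Fin m → ℝ) : EReal :=
  sInf {y : EReal | ∃ X : Matrix (Fin (nn + 1)) (Fin (nn + 1)) ℝ,
    sdprFeas nn m B δ X ∧ y = ((mInner (B 0) X : ℝ) : EReal)}

end Single

/-- The aggregated sparsity pattern graph of the matrices `B₀,…,Bₘ`: vertices
`{1,…,n+1}`, with an edge `{i,j}` (`i ≠ j`) whenever some `Bₖ` has a nonzero `(i,j)`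
(or `(j,i)`) entry. -/
def aggGraph (nn m : ℕ) (B : Fin (m + 1) → Matrix (Fin (nn + 1)) (Fin (nn + 1)) ℝ) :
    SimpleGraph (Fin (nn + 1)) where
  Adj i j := i ≠ j ∧ ∃ k, B k i j ≠ 0 ∨ B k j i ≠ 0
  symm := by
    constructor
    rintro i j ⟨hij, k, hk⟩
    exact ⟨hij.symm, k, hk.symm⟩
  loopless := by
    constructor
    rintro i ⟨h, -⟩
    exact h rfl



section SignSection
open SimpleGraph

variable {V : Type*} {G : SimpleGraph V}

/-- sign product along a walk -/
def wsgn (σ : V → V → ℝ) {a b : V} (w : G.Walk a b) : ℝ :=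
  (w.darts.map fun d => σ d.toProd.1 d.toProd.2).prod

lemma wsgn_nil (σ : V → V → ℝ) (a : V) : wsgn σ (Walk.nil : G.Walk a a) = 1 := by
  simp [wsgn]

lemma wsgn_cons (σ : V → V → ℝ) {a b c : V} (h : G.Adj a b) (p : G.Walk b c) :
    wsgn σ (Walk.cons h p) = σ a b * wsgn σ p := by
  simp [wsgn, Walk.darts_cons]

lemma wsgn_append (σ : V → V → ℝ) {a b c : V} (p : G.Walk a b) (q : G.Walk b c) :
    wsgn σ (p.append q) = wsgn σ p * wsgn σ q := by
  simp [wsgn, Walk.darts_append]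

lemma wsgn_copy (σ : V → V → ℝ) {a b a' b' : V} (w : G.Walk a b) (h1 : a = a') (h2 : b = b') :
    wsgn σ (w.copy h1 h2) = wsgn σ w := by
  subst h1; subst h2; rfl

lemma wsgn_mul_self (σ : V → V → ℝ) (hval : ∀ i j, σ i j = 1 ∨ σ i j = -1)
    {a b : V} (w : G.Walk a b) : wsgn σ w * wsgn σ w = 1 := by
  induction w with
  | nil => simp [wsgn_nil]
  | cons h p ih =>
    rw [wsgn_cons]
    rcases hval _ _ with h1 | h1 <;> rw [h1] <;> nlinarith [ih]

/-- Existence of a sign assignment on the vertices of an acyclic graph realizing a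
symmetric ±1 edge labeling, normalized at a chosen root. -/
lemma exists_sign (G : SimpleGraph V) (hG : G.IsAcyclic)
    (σ : V → V → ℝ) (hval : ∀ i j, σ i j = 1 ∨ σ i j = -1)
    (hsym : ∀ i j, σ i j = σ j i) (r0 : V) :
    ∃ ε : V → ℝ, ε r0 = 1 ∧ (∀ i, ε i * ε i = 1) ∧
      ∀ i j, G.Adj i j → ε i * ε j = σ i j := by
  classical
  have hu := isAcyclic_iff_path_unique.mp hG
  set root : V → V := fun i =>
    if G.Reachable i r0 then r0 else Quot.out (G.connectedComponentMk i) with hroot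
  have hreach : ∀ i, G.Reachable i (root i) := by
    intro i
    by_cases h : G.Reachable i r0
    · simpa [hroot, h] using h
    · simp only [hroot, if_neg h]
      exact ConnectedComponent.exact (Quot.out_eq (G.connectedComponentMk i)).symm
  have hradj : ∀ i j, G.Adj i j → root i = root j := by
    intro i j a
    by_cases h : G.Reachable i r0
    · simp only [hroot, if_pos h, if_pos (a.symm.reachable.trans h)]
    · have hj : ¬ G.Reachable j r0 := fun hj => h (a.reachable.trans hj)
      simp only [hroot, if_neg h, if_neg hj, ConnectedComponent.sound a.reachable]
  set pth : ∀ i, G.Path i (root i) := fun i => (hreach i).some.toPath with hpth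
  set ε : V → ℝ := fun i => wsgn σ (pth i).1 with hε
  have hofP : ∀ (a b : V) (w : G.Walk a b), w.IsPath → b = root a → wsgn σ w = ε a := by
    intro a b w hw hb
    subst hb
    have he : (⟨w, hw⟩ : G.Path a (root a)) = pth a := hu _ _
    exact congrArg (fun q : G.Path a (root a) => wsgn σ q.1) he
  have hεsq : ∀ i, ε i * ε i = 1 := fun i => wsgn_mul_self σ hval (pth i).1
  refine ⟨ε, ?_, hεsq, ?_⟩
  · -- ε r0 = 1
    have h1 : root r0 = r0 := by simp only [hroot]; rw [if_pos (Reachable.refl r0)]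
    have h2 : wsgn σ ((Walk.nil : G.Walk r0 r0).copy rfl h1.symm) = ε r0 :=
      hofP _ _ _ (by simp) rfl
    rw [wsgn_copy, wsgn_nil] at h2
    exact h2.symm
  · intro i j a
    have hrr : root i = root j := hradj i j a
    by_cases hj : j ∈ (pth i).1.support
    · have hq1 : (⟨(pth i).1.takeUntil j hj, (pth i).2.takeUntil hj⟩ : G.Path i j)
          = Path.singleton a := hu _ _
      have e1 : wsgn σ (pth i).1
          = wsgn σ ((pth i).1.takeUntil j hj) * wsgn σ ((pth i).1.dropUntil j hj) := by
        rw [← wsgn_append, (pth i).1.take_spec hj]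
      have e2 : wsgn σ ((pth i).1.takeUntil j hj) = σ i j := by
        have := congrArg (fun q : G.Path i j => wsgn σ q.1) hq1
        simpa [Path.singleton, wsgn_cons, wsgn_nil] using this
      have e3 : wsgn σ ((pth i).1.dropUntil j hj) = ε j := by
        have := hofP j (root j) (((pth i).1.dropUntil j hj).copy rfl hrr)
          (by simpa using (pth i).2.dropUntil hj) rfl
        rwa [wsgn_copy] at this
      have hei : ε i = σ i j * ε j := by
        show wsgn σ (pth i).1 = σ i j * ε j
        rw [e1, e2, e3]
      calc ε i * ε j = σ i j * (ε j * ε j) := by rw [hei]; ring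
        _ = σ i j := by rw [hεsq j, mul_one]
    · have hw : (Walk.cons a.symm (pth i).1).IsPath := (pth i).2.cons hj
      have e3 : wsgn σ ((Walk.cons a.symm (pth i).1).copy rfl hrr) = ε j :=
        hofP j (root j) _ (by simpa using hw) rfl
      rw [wsgn_copy, wsgn_cons] at e3
      have : ε j = σ j i * ε i := e3.symm
      calc ε i * ε j = σ j i * (ε i * ε i) := by rw [this]; ring
        _ = σ i j := by rw [hεsq i, mul_one, hsym]

end SignSection


lemma psd_diag {N : ℕ} {X : Matrix (Fin N) (Fin N) ℝ} (h : X.PosSemidef) (i : Fin N) :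
    0 ≤ X i i := by
  have := h.dotProduct_mulVec_nonneg (Pi.single i 1)
  simpa [dotProduct, mulVec, Pi.single_apply, Finset.sum_ite_eq] using this

lemma psd_quad {N : ℕ} {X : Matrix (Fin N) (Fin N) ℝ} (h : X.PosSemidef)
    {i j : Fin N} (hij : i ≠ j) (a b : ℝ) :
    0 ≤ a * a * X i i + 2 * (a * b) * X i j + b * b * X j j := by
  have hsym : X j i = X i j := by
    have := h.1.apply i j
    simpa using this
  have := h.dotProduct_mulVec_nonneg (Pi.single i a + Pi.single j b)
  have hx : ∀ t, (Pi.single i a + Pi.single j b : Fin N → ℝ) t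
      = (if t = i then a else 0) + (if t = j then b else 0) := by
    intro t; simp [Pi.single_apply]
  rw [show (star (Pi.single i a + Pi.single j b) : Fin N → ℝ)
      = Pi.single i a + Pi.single j b from by simp] at this
  have hv : dotProduct (Pi.single i a + Pi.single j b)
        (X *ᵥ (Pi.single i a + Pi.single j b))
      = a * a * X i i + 2 * (a * b) * X i j + b * b * X j j := by
    simp only [dotProduct, mulVec, hx]
    have expand : ∀ t : Fin N,
        ((if t = i then a else 0) + (if t = j then b else 0)) *
          (∑ s, X t s * ((if s = i then a else 0) + (if s = j then b else 0)))
        = ((if t = i then a else 0) + (if t = j then b else 0)) *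
          (X t i * a + X t j * b) := by
      intro t
      congr 1
      simp [mul_add, mul_ite, mul_zero, Finset.sum_add_distrib, Finset.sum_ite_eq']
    rw [Finset.sum_congr rfl (fun t _ => expand t)]
    simp only [add_mul, ite_mul, zero_mul, Finset.sum_add_distrib, Finset.sum_ite_eq',
      Finset.mem_univ, if_true]
    rw [hsym]; ring
  rw [hv] at this
  exact this

lemma psd_cs {N : ℕ} {X : Matrix (Fin N) (Fin N) ℝ} (h : X.PosSemidef)
    {i j : Fin N} (hij : i ≠ j) : X i j ^ 2 ≤ X i i * X j j := by
  have d1 := psd_diag h i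
  have d2 := psd_diag h j
  have q1 := psd_quad h hij (X j j) (-(X i j))
  have q2 := psd_quad h hij (X i j) (-(X i i))
  have q3 := psd_quad h hij 1 1
  have q4 := psd_quad h hij 1 (-1)
  by_cases hz : X i i + X j j = 0
  · have hii : X i i = 0 := by linarith
    have hjj : X j j = 0 := by linarith
    have : X i j = 0 := by nlinarith [q3, q4]
    rw [this, hii]; nlinarith
  · have hpos : 0 < X i i + X j j := lt_of_le_of_ne (by linarith) (Ne.symm hz)
    nlinarith [q1, q2, hpos]

lemma psd_abs_le {N : ℕ} {X : Matrix (Fin N) (Fin N) ℝ} (h : X.PosSemidef)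
    {i j : Fin N} (hij : i ≠ j) : |X i j| ≤ Real.sqrt (X i i * X j j) := by
  rw [← Real.sqrt_sq_eq_abs]
  exact Real.sqrt_le_sqrt (psd_cs h hij)


lemma quadF_expand {n : ℕ} (B : Matrix (Fin (n + 1)) (Fin (n + 1)) ℝ) (u : Fin n → ℝ) :
    quadF B u = ∑ i, ∑ j, B i j * ((Fin.snoc u 1 : Fin (n+1) → ℝ) i * (Fin.snoc u 1 : Fin (n+1) → ℝ) j) := by
  simp only [quadF, dotProduct, mulVec, Finset.mul_sum]
  exact Finset.sum_congr rfl fun i _ => Finset.sum_congr rfl fun j _ => by ring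

lemma outer_psd {N : ℕ} (v : Fin N → ℝ) :
    (Matrix.of fun i j => v i * v j : Matrix (Fin N) (Fin N) ℝ).PosSemidef := by
  rw [Matrix.posSemidef_iff_dotProduct_mulVec]
  constructor
  · ext i j
    simp [Matrix.conjTranspose_apply, mul_comm]
  · intro y
    have : dotProduct (star y) ((Matrix.of fun i j => v i * v j) *ᵥ y)
        = (∑ i, v i * y i) * (∑ j, v j * y j) := by
      simp only [star_trivial, dotProduct, mulVec, Matrix.of_apply, Finset.mul_sum,
        Finset.sum_mul]
      rw [Finset.sum_comm]
      exact Finset.sum_congr rfl fun i _ => Finset.sum_congr rfl fun j _ => by ring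
    rw [this]
    exact mul_self_nonneg _

lemma mInner_outer {n : ℕ} (B : Matrix (Fin (n + 1)) (Fin (n + 1)) ℝ) (u : Fin n → ℝ) :
    mInner B (Matrix.of fun i j => (Fin.snoc u 1 : Fin (n+1) → ℝ) i * (Fin.snoc u 1 : Fin (n+1) → ℝ) j) = quadF B u := by
  rw [quadF_expand]; rfl

/-- **Corollary 4.4 (ii).** If all relations are `≤`, the aggregated sparsity pattern
graph is a forest, and every edge is sign-definite, then `η(δ) = ζ(δ)` for every `δ`. -/
theorem forest_sign_definite_sdpr_exact
    (nn m : ℕ) (hnn : 0 < nn) (hm : 0 < m)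
    (B : Fin (m + 1) → Matrix (Fin (nn + 1)) (Fin (nn + 1)) ℝ)
    (hBsymm : ∀ k, (B k).IsSymm)
    (hBcorner : ∀ k, B k (Fin.last nn) (Fin.last nn) = 0)
    (hforest : (aggGraph nn m B).IsAcyclic)
    (hsign : ∀ i j : Fin (nn + 1), (aggGraph nn m B).Adj i j →
      (∀ k, 0 ≤ B k i j) ∨ (∀ k, B k i j ≤ 0)) :
    ∀ δ : Fin m → ℝ, sdprVal nn m B δ = qcqpVal nn m B δ := by
  intro δ
  apply le_antisymm
  · -- η ≤ ζ : every QCQP feasible point gives an SDP feasible point with same value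
    apply le_sInf
    rintro y ⟨u, hu, rfl⟩
    apply sInf_le
    refine ⟨Matrix.of fun i j => (Fin.snoc u 1 : Fin (nn+1) → ℝ) i *
        (Fin.snoc u 1 : Fin (nn+1) → ℝ) j, ⟨outer_psd _, ?_, ?_⟩, ?_⟩
    · simp [Fin.snoc_last]
    · intro k; rw [mInner_outer]; exact hu k
    · rw [mInner_outer]
  · -- ζ ≤ η : round every SDP feasible point to a QCQP feasible point
    apply le_sInf
    rintro y ⟨X, ⟨hXpsd, hXlast, hXcon⟩, rfl⟩
    classical
    set G := aggGraph nn m B with hG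
    set σ : Fin (nn+1) → Fin (nn+1) → ℝ :=
      fun i j => if ∀ k, 0 ≤ B k i j then -1 else 1 with hσ
    have hval : ∀ i j, σ i j = 1 ∨ σ i j = -1 := by
      intro i j; by_cases h : ∀ k, 0 ≤ B k i j <;> simp [hσ, h]
    have hBs : ∀ k (i j : Fin (nn+1)), B k i j = B k j i :=
      fun k i j => ((hBsymm k).apply i j).symm
    have hsymσ : ∀ i j, σ i j = σ j i := by
      intro i j
      have hc : (∀ k, 0 ≤ B k i j) = (∀ k, 0 ≤ B k j i) := by
        apply propext; constructor <;> intro h k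
        · rw [← hBs k i j]; exact h k
        · rw [hBs k i j]; exact h k
      simp only [hσ, hc]
    obtain ⟨ε, hεlast, hεsq, hεadj⟩ := exists_sign G hforest σ hval hsymσ (Fin.last nn)
    set vv : Fin (nn+1) → ℝ := fun i => ε i * Real.sqrt (X i i) with hvv
    set uu : Fin nn → ℝ := fun i => vv i.castSucc with huu
    have hsnoc : (Fin.snoc uu 1 : Fin (nn+1) → ℝ) = vv := by
      funext i
      refine Fin.lastCases ?_ ?_ i
      · rw [Fin.snoc_last, hvv]; dsimp only
        rw [hεlast, hXlast, Real.sqrt_one, one_mul]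
      · intro i; rw [Fin.snoc_castSucc]
    have hdiag : ∀ i, vv i * vv i = X i i := by
      intro i
      have h0 := psd_diag hXpsd i
      rw [hvv]; dsimp only
      calc ε i * Real.sqrt (X i i) * (ε i * Real.sqrt (X i i))
          = (ε i * ε i) * (Real.sqrt (X i i) * Real.sqrt (X i i)) := by ring
        _ = X i i := by rw [hεsq i, Real.mul_self_sqrt h0, one_mul]
    have hkey : ∀ k, quadF (B k) uu ≤ mInner (B k) X := by
      intro k
      rw [quadF_expand, hsnoc]
      simp only [mInner]
      apply Finset.sum_le_sum; intro i _
      apply Finset.sum_le_sum; intro j _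
      by_cases hij : i = j
      · subst hij
        exact le_of_eq (by rw [hdiag])
      by_cases hadj : G.Adj i j
      · have hε2 : ε i * ε j = σ i j := hεadj i j hadj
        have hprod : vv i * vv j = σ i j * Real.sqrt (X i i * X j j) := by
          rw [hvv]; dsimp only
          rw [Real.sqrt_mul (psd_diag hXpsd i)]
          calc ε i * Real.sqrt (X i i) * (ε j * Real.sqrt (X j j))
              = (ε i * ε j) * (Real.sqrt (X i i) * Real.sqrt (X j j)) := by ring
            _ = σ i j * (Real.sqrt (X i i) * Real.sqrt (X j j)) := by rw [hε2]
        have habs := abs_le.mp (psd_abs_le hXpsd hij)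
        by_cases hc : ∀ k', 0 ≤ B k' i j
        · have hσv : σ i j = -1 := by simp [hσ, hc]
          have hle : vv i * vv j ≤ X i j := by
            rw [hprod, hσv]; linarith [habs.1]
          exact mul_le_mul_of_nonneg_left hle (hc k)
        · have h2 : ∀ k', B k' i j ≤ 0 := by
            rcases hsign i j hadj with h | h
            · exact absurd h hc
            · exact h
          have hσv : σ i j = 1 := by simp only [hσ]; rw [if_neg hc]
          have hle : X i j ≤ vv i * vv j := by
            rw [hprod, hσv]; linarith [habs.2]
          exact mul_le_mul_of_nonpos_left hle (h2 k)
      · have hB0 : B k i j = 0 := by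
          by_contra hne
          exact hadj ⟨hij, k, Or.inl hne⟩
        rw [hB0]; simp
    have hfeas : qcqpFeas nn m B δ uu := fun k => le_trans (hkey k.succ) (hXcon k)
    refine le_trans (sInf_le ⟨uu, hfeas, rfl⟩) ?_
    exact EReal.coe_le_coe_iff.mpr (hkey 0)
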